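/- Double strict convex dual of an open salient cone (part (iii) of the paper's Proposition on convex cones): Let V be a finite-dimensional real inner product space and C ⊆ V a nonempty open convex cone with closure(C) ∩ (−closure(C)) = {0}. Then C^⊛⊛ = C, where C^⊛ denotes the strict convex dual. -/

import Mathlib

open scoped RealInnerProductSpace

/-- The strict convex dual of a subset `C` of a real inner product space:
all vectors pairing strictly positively with every nonzero element of `closure C`. -/
def strictDual {V : Type*} [NormedAddCommGroup V] [InnerProductSpace ℝ V]
    (C : Set V) : Set V :=
  {u : V | ∀ v ∈ closure C, v ≠ 0 → 0 < ⟪u, v⟫}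

/-- Double strict convex dual of an open salient cone: for a nonempty open convex
cone `C` in a finite-dimensional real inner product space with
`closure C ∩ (−closure C) = {0}`, one has `C^⊛⊛ = C`. -/
theorem statement18 {V : Type*} [NormedAddCommGroup V] [InnerProductSpace ℝ V]
    [FiniteDimensional ℝ V]
    (C : Set V) (hne : C.Nonempty) (hopen : IsOpen C) (hconv : Convex ℝ C)
    (hcone : ∀ c ∈ C, ∀ t : ℝ, 0 < t → t • c ∈ C)
    (hsal : closure C ∩ (-closure C) = {0}) :
    strictDual (strictDual C) = C := by
  classical
  obtain ⟨c₀, hc₀⟩ := hne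
  -- closure C is a convex cone
  have hsmul_cl : ∀ ⦃t : ℝ⦄, 0 < t → ∀ ⦃x : V⦄, x ∈ closure C → t • x ∈ closure C := by
    intro t ht x hx
    exact map_mem_closure (continuous_const_smul t) hx (fun y hy => hcone y hy t ht)
  have hadd_cl : ∀ ⦃x : V⦄, x ∈ closure C → ∀ ⦃y : V⦄, y ∈ closure C → x + y ∈ closure C := by
    intro x hx y hy
    have hmid : (1/2 : ℝ) • x + (1/2 : ℝ) • y ∈ closure C :=
      hconv.closure hx hy (by norm_num) (by norm_num) (by norm_num)
    have h2 : (2 : ℝ) • ((1/2 : ℝ) • x + (1/2 : ℝ) • y) ∈ closure C :=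
      hsmul_cl (by norm_num) hmid
    have : (2 : ℝ) • ((1/2 : ℝ) • x + (1/2 : ℝ) • y) = x + y := by
      rw [smul_add, smul_smul, smul_smul]; norm_num
    rwa [this] at h2
  set Kc : ConvexCone ℝ V :=
    { carrier := closure C
      smul_mem' := hsmul_cl
      add_mem' := hadd_cl } with hKc
  have hKcS : (Kc : Set V) = closure C := rfl
  have hKne : (Kc : Set V).Nonempty := ⟨c₀, subset_closure hc₀⟩
  have hKcl : IsClosed (Kc : Set V) := isClosed_closure
  -- the weak dual cone
  set D : Set V := ((ProperCone.innerDual (closure C)) : Set V) with hD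
  have hDmem : ∀ w : V, w ∈ D ↔ ∀ x ∈ closure C, 0 ≤ ⟪x, w⟫ := fun w =>
    ProperCone.mem_innerDual
  have hD0 : (0 : V) ∈ D := (hDmem 0).2 (fun x _ => by simp)
  -- biduality for the closed cone
  have h0cl : (0 : V) ∈ closure C := by
    have h1 : Filter.Tendsto (fun n : ℕ => (1 / ((n : ℝ) + 1)) • c₀)
        Filter.atTop (nhds ((0 : ℝ) • c₀)) :=
      tendsto_one_div_add_atTop_nhds_zero_nat.smul_const c₀
    rw [zero_smul] at h1
    exact mem_closure_of_tendsto h1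
      (Filter.Eventually.of_forall fun n => hcone c₀ hc₀ (1 / ((n : ℝ) + 1)) (by positivity))
  let Pc : ProperCone ℝ V :=
    { carrier := closure C
      add_mem' := fun hx hy => hadd_cl hx hy
      zero_mem' := h0cl
      smul_mem' := fun c x hx => by
        by_cases hc : (c : ℝ) = 0
        · change (c : ℝ) • x ∈ closure C
          rw [hc, zero_smul]; exact h0cl
        · change (c : ℝ) • x ∈ closure C
          exact hsmul_cl (lt_of_le_of_ne c.2 (Ne.symm hc)) hx
      isClosed' := isClosed_closure }
  have hKdd : ((ProperCone.innerDual
      ((ProperCone.innerDual (closure C) : Set V)) : Set V)) = (Kc : Set V) :=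
    congrArg SetLike.coe (ProperCone.innerDual_innerDual Pc)
  -- span of D is everything
  have hspan : Submodule.span ℝ D = ⊤ := by
    by_contra h
    have horth : (Submodule.span ℝ D)ᗮ ≠ ⊥ := by
      rw [Ne, Submodule.orthogonal_eq_bot_iff]; exact h
    obtain ⟨w, hwmem, hw0⟩ := Submodule.ne_bot_iff _ |>.1 horth
    have hwperp : ∀ x ∈ D, ⟪x, w⟫ = 0 := fun x hx =>
      (Submodule.mem_orthogonal _ w).1 hwmem x (Submodule.subset_span hx)
    have hwK : w ∈ (Kc : Set V) := by
      rw [← hKdd]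
      exact fun x hx => le_of_eq (hwperp x hx).symm
    have hwK' : -w ∈ (Kc : Set V) := by
      rw [← hKdd]
      intro x hx
      change 0 ≤ ⟪x, -w⟫
      rw [inner_neg_right, hwperp x hx, neg_zero]
    have : w ∈ closure C ∩ (-closure C) := ⟨hwK, by simpa using (show -w ∈ closure C from hwK')⟩
    rw [hsal] at this
    exact hw0 this
  -- D has nonempty interior
  have hDconv : Convex ℝ D := (ProperCone.innerDual (closure C)).convex
  have hint : (interior D).Nonempty := by
    rw [hDconv.interior_nonempty_iff_affineSpan_eq_top]
    rw [AffineSubspace.affineSpan_eq_top_iff_vectorSpan_eq_top_of_nonempty ℝ V V ⟨0, hD0⟩]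
    refine top_unique ?_
    rw [← hspan]
    refine Submodule.span_le.2 fun x hx => ?_
    have := vsub_mem_vectorSpan ℝ hx hD0
    simpa using this
  obtain ⟨e, he⟩ := hint
  -- e is in the strict dual
  have heD : e ∈ strictDual C := by
    intro v hv hv0
    by_contra hle
    push_neg at hle
    obtain ⟨ε, hε, hball⟩ := Metric.mem_nhds_iff.1 (mem_interior_iff_mem_nhds.1 he)
    set δ : ℝ := ε / (2 * (‖v‖ + 1)) with hδdef
    have hδ : 0 < δ := by positivity
    have hδv : δ * ‖v‖ < ε := by
      rw [hδdef, div_mul_eq_mul_div, div_lt_iff₀ (by positivity)]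
      nlinarith [norm_nonneg v]
    have hmem : e - δ • v ∈ D := by
      apply hball
      rw [Metric.mem_ball, dist_eq_norm]
      have : e - δ • v - e = -(δ • v) := by abel
      rw [this, norm_neg, norm_smul, Real.norm_eq_abs, abs_of_pos hδ]
      exact hδv
    have := (hDmem _).1 hmem v hv
    rw [inner_sub_right, real_inner_smul_right, real_inner_self_eq_norm_sq] at this
    have hvc : ⟪v, e⟫ ≤ 0 := by rw [real_inner_comm]; exact hle
    have hvn : 0 < ‖v‖ := norm_pos_iff.2 hv0
    have hnorm : 0 < ‖v‖ ^ 2 := by positivity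
    nlinarith
  -- strict dual is dense in D
  have hdense : ∀ w ∈ D, w ∈ closure (strictDual C) := by
    intro w hw
    have htend : Filter.Tendsto (fun n : ℕ => w + (1 / ((n : ℝ) + 1)) • e)
        Filter.atTop (nhds w) := by
      have h1 : Filter.Tendsto (fun n : ℕ => (1 / ((n : ℝ) + 1)) • e)
          Filter.atTop (nhds ((0 : ℝ) • e)) :=
        tendsto_one_div_add_atTop_nhds_zero_nat.smul_const e
      have := Filter.Tendsto.const_add w h1
      simpa using this
    refine mem_closure_of_tendsto htend (Filter.Eventually.of_forall fun n => ?_)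
    intro v hv hv0
    have h1 : 0 ≤ ⟪w, v⟫ := by rw [real_inner_comm]; exact (hDmem w).1 hw v hv
    have h2 : 0 < ⟪e, v⟫ := heD v hv hv0
    have h3 : 0 < (1 / ((n : ℝ) + 1)) := by positivity
    rw [inner_add_left, real_inner_smul_left]
    have := mul_pos h3 h2
    linarith
  -- closure of the strict dual sits in D-like nonnegativity
  have hclD : ∀ v ∈ closure (strictDual C), ∀ x ∈ closure C, 0 ≤ ⟪v, x⟫ := by
    intro v hv x hx
    have hclosed : IsClosed {y : V | 0 ≤ ⟪y, x⟫} :=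
      isClosed_le continuous_const (continuous_id.inner continuous_const)
    have hsub : strictDual C ⊆ {y : V | 0 ≤ ⟪y, x⟫} := by
      intro u hu
      by_cases hx0 : x = 0
      · simp [hx0]
      · exact (hu x hx hx0).le
    exact hclosed.closure_subset_iff.2 hsub hv
  -- now prove the equality
  ext u
  constructor
  · -- strictDual (strictDual C) ⊆ C
    intro hu
    by_contra hC
    obtain ⟨f, s, hfC, hfu⟩ :=
      geometric_hahn_banach_open hconv hopen (convex_singleton u)
        (Set.disjoint_singleton_right.2 hC)
    have hfu' : s ≤ f u := hfu u rfl
    have hfC0 : ∀ c ∈ C, f c ≤ 0 := by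
      intro c hc
      by_contra h
      push_neg at h
      have ht : 0 < (|s| + 1) / f c := div_pos (by positivity) h
      have := hfC _ (hcone c hc _ ht)
      rw [map_smul, smul_eq_mul, div_mul_cancel₀ _ (ne_of_gt h)] at this
      have h2 : s < |s| + 1 := lt_of_le_of_lt (le_abs_self s) (lt_add_one _)
      linarith
    have hs0 : 0 ≤ s := by
      by_contra h
      push_neg at h
      have hc1 : f c₀ < s := hfC c₀ hc₀
      have hfc0 : f c₀ < 0 := hc1.trans h
      have ht : 0 < s / (2 * f c₀) := div_pos_of_neg_of_neg (by linarith) (by linarith)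
      have := hfC _ (hcone c₀ hc₀ _ ht)
      rw [map_smul, smul_eq_mul] at this
      have hne0 : f c₀ ≠ 0 := ne_of_lt hfc0
      have heq : s / (2 * f c₀) * f c₀ = s / 2 := by
        field_simp
      rw [heq] at this
      linarith
    -- representing vector
    set z : V := (InnerProductSpace.toDual ℝ V).symm f with hz
    have hzf : ∀ x : V, ⟪z, x⟫ = f x := fun x =>
      InnerProductSpace.toDual_symm_apply
    set w : V := -z with hwdef
    have hwD : w ∈ D := by
      rw [hDmem]
      intro x hx
      have hclosed : IsClosed {y : V | 0 ≤ ⟪y, w⟫} :=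
        isClosed_le continuous_const (continuous_id.inner continuous_const)
      have hsub : C ⊆ {y : V | 0 ≤ ⟪y, w⟫} := by
        intro c hc
        have : ⟪c, w⟫ = -f c := by
          rw [hwdef, inner_neg_right, real_inner_comm, hzf]
        rw [Set.mem_setOf_eq, this]
        linarith [hfC0 c hc]
      exact hclosed.closure_subset_iff.2 hsub hx
    have hw0 : w ≠ 0 := by
      intro h
      have hz0 : z = 0 := by rwa [hwdef, neg_eq_zero] at h
      have h1 : f c₀ = 0 := by rw [← hzf, hz0, inner_zero_left]
      have h2 : f u = 0 := by rw [← hzf, hz0, inner_zero_left]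
      have := hfC c₀ hc₀
      rw [h1] at this
      rw [h2] at hfu'
      linarith
    have hpos : 0 < ⟪u, w⟫ := hu w (hdense w hwD) hw0
    have : ⟪u, w⟫ = -f u := by
      rw [hwdef, inner_neg_right, real_inner_comm, hzf]
    rw [this] at hpos
    linarith
  · -- C ⊆ strictDual (strictDual C)
    intro hc v hv hv0
    obtain ⟨ε, hε, hball⟩ := Metric.isOpen_iff.1 hopen u hc
    set δ : ℝ := ε / (2 * (‖v‖ + 1)) with hδdef
    have hδ : 0 < δ := by positivity
    have hδv : δ * ‖v‖ < ε := by
      rw [hδdef, div_mul_eq_mul_div, div_lt_iff₀ (by positivity)]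
      nlinarith [norm_nonneg v]
    have hmem : u - δ • v ∈ C := by
      apply hball
      rw [Metric.mem_ball, dist_eq_norm]
      have : u - δ • v - u = -(δ • v) := by abel
      rw [this, norm_neg, norm_smul, Real.norm_eq_abs, abs_of_pos hδ]
      exact hδv
    have h1 : 0 ≤ ⟪v, u - δ • v⟫ := hclD v hv _ (subset_closure hmem)
    rw [inner_sub_right, real_inner_smul_right, real_inner_self_eq_norm_sq] at h1
    have hnorm : 0 < ‖v‖ ^ 2 := by
      have : 0 < ‖v‖ := norm_pos_iff.2 hv0
      positivity
    have : 0 < ⟪v, u⟫ := by nlinarith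
    rwa [real_inner_comm] at this
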